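/- Let A be a normed complex vector space, let B be a complex Banach space, let f : A → B be a mapping, and let ε : A → [0,∞) be a function such that ‖3f(a/3) − f(a)‖ ≤ ε(a) for all a ∈ A and Σ_{i=1}^{∞} 3^{−i} ε(3^i a) < ∞ for all a ∈ A. Then for every a ∈ A the limit h(a) = lim_{n→∞} 3^{−n} f(3^n a) exists, and the resulting mapping h : A → B satisfies ‖h(a) − f(a)‖ ≤ Σ_{i=1}^{∞} 3^{−i} ε(3^i a) for all a ∈ A. -/

import Mathlib

open Filter

/-- Existence of the limit `h(a) = lim 3⁻ⁿ f(3ⁿ a)` and the stability estimate. -/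
theorem stmt_16
    {A B : Type*} [NormedAddCommGroup A] [NormedSpace ℂ A]
    [NormedAddCommGroup B] [NormedSpace ℂ B] [CompleteSpace B]
    (f : A → B) (ε : A → ℝ) (hε : ∀ a : A, 0 ≤ ε a)
    (h : ∀ a : A, ‖(3:ℂ) • f ((3:ℂ)⁻¹ • a) - f a‖ ≤ ε a)
    (hsum : ∀ a : A, Summable (fun i : ℕ => ((3:ℝ)^(i+1))⁻¹ * ε ((3:ℂ)^(i+1) • a))) :
    ∃ h' : A → B,
      (∀ a : A, Tendsto (fun n : ℕ => ((3:ℂ)^n)⁻¹ • f ((3:ℂ)^n • a))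
        atTop (nhds (h' a))) ∧
      ∀ a : A, ‖h' a - f a‖ ≤ ∑' i : ℕ, ((3:ℝ)^(i+1))⁻¹ * ε ((3:ℂ)^(i+1) • a) := by
  set g : ℕ → A → B := fun n a => ((3:ℂ)^n)⁻¹ • f ((3:ℂ)^n • a) with hg
  set d : A → ℕ → B := fun a n => g (n+1) a - g n a with hd
  have key : ∀ (a : A) (n : ℕ),
      ‖d a n‖ ≤ ((3:ℝ)^(n+1))⁻¹ * ε ((3:ℂ)^(n+1) • a) := by
    intro a n
    have h1 := h ((3:ℂ)^(n+1) • a)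
    have e1 : (3:ℂ)⁻¹ • (3:ℂ)^(n+1) • a = (3:ℂ)^n • a := by
      rw [smul_smul, pow_succ]
      field_simp
    rw [e1] at h1
    have e2 : d a n = ((3:ℂ)^(n+1))⁻¹ •
        (f ((3:ℂ)^(n+1) • a) - (3:ℂ) • f ((3:ℂ)^n • a)) := by
      simp only [hd, hg, smul_sub, smul_smul]
      congr 2
      rw [pow_succ]
      field_simp
    rw [e2, norm_smul, norm_inv, norm_pow]
    have : ‖(3:ℂ)‖ = 3 := by simp
    rw [this]
    have : ‖f ((3:ℂ)^(n+1) • a) - (3:ℂ) • f ((3:ℂ)^n • a)‖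
        = ‖(3:ℂ) • f ((3:ℂ)^n • a) - f ((3:ℂ)^(n+1) • a)‖ := norm_sub_rev _ _
    rw [this]
    exact mul_le_mul_of_nonneg_left h1 (by positivity)
  have hnorm : ∀ a : A, Summable (fun n => ‖d a n‖) := fun a =>
    Summable.of_nonneg_of_le (fun n => norm_nonneg _) (key a) (hsum a)
  have hds : ∀ a : A, Summable (d a) := fun a => (hnorm a).of_norm
  refine ⟨fun a => f a + ∑' n, d a n, fun a => ?_, fun a => ?_⟩
  · have htel : ∀ n : ℕ, g n a = f a + ∑ i ∈ Finset.range n, d a i := by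
      intro n
      rw [hd]
      simp only [Finset.sum_range_sub (fun n => g n a)]
      have : g 0 a = f a := by simp [hg]
      rw [this]; abel
    have := ((hds a).hasSum.tendsto_sum_nat).const_add (f a)
    convert this using 1
    funext n
    exact htel n
  · have : (fun a => f a + ∑' n, d a n) a - f a = ∑' n, d a n := add_sub_cancel_left _ _
    rw [this]
    calc ‖∑' n, d a n‖ ≤ ∑' n, ‖d a n‖ := norm_tsum_le_tsum_norm (hnorm a)
      _ ≤ ∑' i : ℕ, ((3:ℝ)^(i+1))⁻¹ * ε ((3:ℂ)^(i+1) • a) :=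
        Summable.tsum_le_tsum (key a) (hnorm a) (hsum a)
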